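/- For a normed A-valued function algebra 𝒜 on X, every point x ∈ X and character φ of A determine a character ε_x ⋄ φ : 𝒜 → ℂ, f ↦ φ(f(x)), and the map 𝒥 : X × Δ(A) → Δ(𝒜), (x,φ) ↦ ε_x ⋄ φ, is continuous and injective (a homeomorphism onto its compact image), where character spaces carry the Gelfand (weak-star) topology. -/

import Mathlib

open WeakDual

variable {X : Type*} [TopologicalSpace X] [CompactSpace X] [T2Space X] [Nonempty X]
variable {A : Type*} [NormedCommRing A] [NormedAlgebra ℂ A] [CompleteSpace A] [Nontrivial A]
variable {B : Type*} [NormedCommRing B] [NormedAlgebra ℂ B] [CompleteSpace B]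

/-- The map 𝒥 : X × Δ(A) → Δ(𝒜), (x,φ) ↦ ε_x ⋄ φ, is well defined, continuous and
injective: a homeomorphism onto a compact subset of Δ(𝒜). -/
theorem stmt8
(ι : B →ₐ[ℂ] C(X, A)) (hinj : Function.Injective ι)
    (κ : A →ₐ[ℂ] B) (hκ : ∀ a : A, ι (κ a) = ContinuousMap.const X a)
    (hκnorm : ∃ c₁ > (0:ℝ), ∃ c₂ > (0:ℝ), ∀ a : A, c₁ * ‖a‖ ≤ ‖κ a‖ ∧ ‖κ a‖ ≤ c₂ * ‖a‖)
    (hdom : ∀ f : B, ‖ι f‖ ≤ ‖f‖)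
    (hsep : ∀ x y : X, x ≠ y → ∀ M : Ideal A, M.IsMaximal → ∃ f : B, ι f x - ι f y ∉ M)
(hss : Ideal.jacobson (⊥ : Ideal A) = ⊥) :
    ∃ J : X × characterSpace ℂ A → characterSpace ℂ B,
      (∀ (x : X) (φ : characterSpace ℂ A) (f : B), J (x, φ) f = φ (ι f x)) ∧
      Continuous J ∧ Function.Injective J ∧
      Topology.IsEmbedding J ∧ IsCompact (Set.range J) := by
  classical
  -- the underlying algebra hom for each (x, φ)
  set Ψ : X × characterSpace ℂ A → (B →ₐ[ℂ] ℂ) := fun p =>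
    (CharacterSpace.equivAlgHom p.2).comp ((ContinuousMap.evalAlgHom ℂ A p.1).comp ι) with hΨ
  set J : X × characterSpace ℂ A → characterSpace ℂ B := fun p =>
    CharacterSpace.equivAlgHom.symm (Ψ p) with hJ
  have happly : ∀ (x : X) (φ : characterSpace ℂ A) (f : B), J (x, φ) f = φ (ι f x) := by
    intro x φ f
    have := CharacterSpace.equivAlgHom_symm_coe (Ψ (x, φ))
    simp only [hJ]
    rw [this]
    simp [hΨ, CharacterSpace.equivAlgHom]
  -- continuity
  have hGcont : Continuous (gelfandTransform ℂ A) := by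
    refine AddMonoidHomClass.continuous_of_bound (gelfandTransform ℂ A) ‖(1 : A)‖ ?_
    intro a
    refine ContinuousMap.norm_le _ (by positivity) |>.mpr ?_
    intro φ
    simpa [mul_comm] using AlgHom.norm_apply_le_self_mul_norm_one (CharacterSpace.equivAlgHom φ) a
  have hcont : Continuous J := by
    apply Continuous.subtype_mk
    refine WeakDual.continuous_of_continuous_eval fun f => ?_
    have h1 : Continuous fun p : X × characterSpace ℂ A =>
        (gelfandTransform ℂ A (ι f p.1), p.2) :=
      (hGcont.comp ((ι f).continuous.comp continuous_fst)).prodMk continuous_snd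
    have h2 : Continuous fun q : C(characterSpace ℂ A, ℂ) × characterSpace ℂ A => q.1 q.2 :=
      continuous_eval
    have heq : (fun p : X × characterSpace ℂ A => (J p : WeakDual ℂ B) f) =
        fun p => (p.2 : WeakDual ℂ A) (ι f p.1) := funext fun p => happly p.1 p.2 f
    show Continuous fun p : X × characterSpace ℂ A => (J p : WeakDual ℂ B) f
    rw [heq]
    exact h2.comp h1
  -- injectivity
  have hinjJ : Function.Injective J := by
    rintro ⟨x, φ⟩ ⟨y, ψ⟩ h
    have hval : ∀ f : B, φ (ι f x) = ψ (ι f y) := by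
      intro f
      rw [← happly x φ f, ← happly y ψ f, h]
    have hφψ : φ = ψ := by
      ext a
      have := hval (κ a)
      simpa [hκ a] using this
    have hxy : x = y := by
      by_contra hne
      obtain ⟨f, hf⟩ := hsep x y hne (RingHom.ker φ) inferInstance
      apply hf
      have : φ (ι f x) = φ (ι f y) := by rw [hval f, hφψ]
      simpa [RingHom.mem_ker, map_sub, sub_eq_zero] using this
    rw [hxy, hφψ]
  have hemb : Topology.IsEmbedding J :=
    (hcont.isClosedEmbedding hinjJ).isEmbedding
  exact ⟨J, happly, hcont, hinjJ, hemb, isCompact_range hcont⟩
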